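/- arXiv:2305.18246 — 3 statements merged into one kernel-verified Lean document; each statement's English description precedes it below -/
import Mathlib

section
/- Let λ > 0, H > 0, and let φ_1, …, φ_{k−1} ∈ ℝ^d satisfy ‖φ_τ‖₂ ≤ 1 and y_1, …, y_{k−1} ∈ ℝ satisfy |y_τ| ≤ 2H for all τ. Let Λ = λI + Σ_{τ=1}^{k−1} φ_τ φ_τᵀ. Then ‖Λ^{−1} Σ_{τ=1}^{k−1} y_τ φ_τ‖₂ ≤ 2H·√(k·d/λ). -/
open Matrix

/-- Interpret a plain vector as an element of Euclidean space (so that `‖·‖` is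
the Euclidean `ℓ²` norm). -/
noncomputable def toE {d : ℕ} (v : Fin d → ℝ) : EuclideanSpace ℝ (Fin d) := WithLp.toLp 2 v

lemma dot_sum_right {d n : ℕ} (v : Fin d → ℝ) (f : Fin n → (Fin d → ℝ)) :
    v ⬝ᵥ (∑ τ, f τ) = ∑ τ, v ⬝ᵥ f τ := by
  simp only [dotProduct, Finset.sum_apply, Finset.mul_sum]
  exact Finset.sum_comm

lemma sum_mulVec' {d n : ℕ} (M : Fin n → Matrix (Fin d) (Fin d) ℝ) (x : Fin d → ℝ) :
    (∑ τ, M τ) *ᵥ x = ∑ τ, (M τ) *ᵥ x := by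
  ext i
  rw [Finset.sum_apply]
  simp only [mulVec, dotProduct, Matrix.sum_apply, Finset.sum_mul]
  exact Finset.sum_comm

lemma quad_expand {d n : ℕ} (lam : ℝ) (φ : Fin n → (Fin d → ℝ)) (x : Fin d → ℝ) :
    x ⬝ᵥ ((lam • (1 : Matrix (Fin d) (Fin d) ℝ) + ∑ τ, vecMulVec (φ τ) (φ τ)) *ᵥ x)
      = lam * (x ⬝ᵥ x) + ∑ τ, (φ τ ⬝ᵥ x) ^ 2 := by
  rw [add_mulVec, dotProduct_add, smul_mulVec, one_mulVec, dotProduct_smul,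
    sum_mulVec', dot_sum_right, smul_eq_mul]
  congr 1
  refine Finset.sum_congr rfl fun τ _ => ?_
  simp only [mulVec, dotProduct, vecMulVec_apply, sq, Finset.sum_mul_sum, Finset.mul_sum]
  refine Finset.sum_congr rfl fun i _ => ?_
  rw [Finset.sum_mul]
  exact Finset.sum_congr rfl fun j _ => by ring

/-- abstract form of Lemma B.2. With `Λ = λ I + ∑ τ φ_τ φ_τᵀ`,
`‖φ_τ‖₂ ≤ 1` and `|y_τ| ≤ 2H`, the regularized least-squares solution satisfies
`‖Λ⁻¹ ∑ τ y_τ φ_τ‖₂ ≤ 2 H √(k d / λ)`. -/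
theorem norm_ridge_solution_le
    (d k : ℕ) (hk : 1 ≤ k) (lam H : ℝ) (hlam : 0 < lam) (hH : 0 < H)
    (φ : Fin (k - 1) → (Fin d → ℝ)) (y : Fin (k - 1) → ℝ)
    (hφ : ∀ τ, ‖toE (φ τ)‖ ≤ 1) (hy : ∀ τ, |y τ| ≤ 2 * H)
    (Λ : Matrix (Fin d) (Fin d) ℝ)
    (hΛ : Λ = lam • (1 : Matrix (Fin d) (Fin d) ℝ) + ∑ τ, vecMulVec (φ τ) (φ τ)) :
    ‖toE (Λ⁻¹ *ᵥ ∑ τ, y τ • φ τ)‖ ≤ 2 * H * Real.sqrt (k * d / lam) := by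
  rcases Nat.eq_zero_or_pos d with hd | hd
  · subst hd
    have h1 : ‖toE (Λ⁻¹ *ᵥ ∑ τ, y τ • φ τ)‖ = 0 := by
      rw [EuclideanSpace.norm_eq]; simp
    rw [h1]
    positivity
  -- positive definiteness
  have hpd : Λ.PosDef := by
    rw [posDef_iff_dotProduct_mulVec]
    constructor
    · rw [hΛ]
      unfold Matrix.IsHermitian
      rw [conjTranspose_add, conjTranspose_smul]
      congr 1
      · simp
      · rw [conjTranspose_sum]
        refine Finset.sum_congr rfl fun τ _ => ?_
        ext i j
        simp [vecMulVec_apply, mul_comm]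
    · intro x hx
      have hxx : 0 < x ⬝ᵥ x := by
        have h0 : x ⬝ᵥ x = ∑ i, x i ^ 2 := by simp [dotProduct, sq]
        rw [h0]
        rcases Function.ne_iff.mp hx with ⟨i, hi⟩
        exact Finset.sum_pos' (fun j _ => sq_nonneg _)
          ⟨i, Finset.mem_univ i, sq_pos_of_ne_zero hi⟩
      have hstar : (star x : Fin d → ℝ) = x := by ext i; simp
      rw [hstar, hΛ, quad_expand]
      have : 0 ≤ ∑ τ, (φ τ ⬝ᵥ x) ^ 2 := Finset.sum_nonneg fun τ _ => sq_nonneg _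
      nlinarith
  set b := ∑ τ, y τ • φ τ with hb
  set x := Λ⁻¹ *ᵥ b with hx
  have hΛx : Λ *ᵥ x = b := by
    rw [hx, mulVec_mulVec, Matrix.mul_nonsing_inv _ hpd.det_pos.ne'.isUnit, one_mulVec]
  -- the key identity
  have hkey : lam * (x ⬝ᵥ x) + ∑ τ, (φ τ ⬝ᵥ x) ^ 2 = ∑ τ, y τ * (φ τ ⬝ᵥ x) := by
    have h1 : x ⬝ᵥ (Λ *ᵥ x) = lam * (x ⬝ᵥ x) + ∑ τ, (φ τ ⬝ᵥ x) ^ 2 := by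
      rw [hΛ]; exact quad_expand lam φ x
    rw [← h1, hΛx, hb, dot_sum_right]
    refine Finset.sum_congr rfl fun τ _ => ?_
    rw [dotProduct_smul, smul_eq_mul, dotProduct_comm]
  -- bound: lam * ‖x‖² ≤ k * H²
  have hbound : lam * (x ⬝ᵥ x) ≤ (k : ℝ) * H ^ 2 := by
    have h2 : lam * (x ⬝ᵥ x) = ∑ τ, (y τ * (φ τ ⬝ᵥ x) - (φ τ ⬝ᵥ x) ^ 2) := by
      rw [Finset.sum_sub_distrib]; linarith [hkey]
    rw [h2]
    calc ∑ τ, (y τ * (φ τ ⬝ᵥ x) - (φ τ ⬝ᵥ x) ^ 2)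
        ≤ ∑ _τ : Fin (k - 1), H ^ 2 := by
          refine Finset.sum_le_sum fun τ _ => ?_
          have h3 : |y τ| ≤ 2 * H := hy τ
          have h4 : y τ ^ 2 ≤ (2 * H) ^ 2 := by
            rw [← sq_abs]; exact pow_le_pow_left₀ (abs_nonneg _) h3 2
          nlinarith [sq_nonneg (y τ / 2 - φ τ ⬝ᵥ x)]
      _ = (↑(k - 1) : ℝ) * H ^ 2 := by
          rw [Finset.sum_const, Finset.card_univ, Fintype.card_fin, nsmul_eq_mul]
      _ ≤ (k : ℝ) * H ^ 2 := by
          have : ((k - 1 : ℕ) : ℝ) ≤ (k : ℝ) := by exact_mod_cast Nat.sub_le k 1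
          nlinarith [sq_nonneg H]
  have hxx : 0 ≤ x ⬝ᵥ x := by
    have h0 : x ⬝ᵥ x = ∑ i, x i ^ 2 := by simp [dotProduct, sq]
    rw [h0]; exact Finset.sum_nonneg fun i _ => sq_nonneg _
  have hnorm : ‖toE x‖ = Real.sqrt (x ⬝ᵥ x) := by
    rw [EuclideanSpace.norm_eq]
    congr 1
    simp [toE, dotProduct, sq, Real.norm_eq_abs, abs_mul_abs_self, mul_comm]
  rw [hnorm]
  have hxle : x ⬝ᵥ x ≤ (k : ℝ) * H ^ 2 / lam := by
    rw [le_div_iff₀ hlam]; linarith [hbound]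
  have hd1 : (1 : ℝ) ≤ (d : ℝ) := by exact_mod_cast hd
  have hk0 : (0 : ℝ) ≤ (k : ℝ) := Nat.cast_nonneg k
  calc Real.sqrt (x ⬝ᵥ x) ≤ Real.sqrt (4 * H ^ 2 * ((k : ℝ) * d / lam)) := by
        apply Real.sqrt_le_sqrt
        refine hxle.trans ?_
        rw [show 4 * H ^ 2 * ((k : ℝ) * d / lam) = 4 * H ^ 2 * ((k : ℝ) * d) / lam by ring,
          div_le_div_iff₀ hlam hlam]
        have h5 : 0 ≤ (k : ℝ) * H ^ 2 * lam :=
          mul_nonneg (mul_nonneg hk0 (sq_nonneg H)) hlam.le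
        nlinarith [h5, hd1]
    _ = 2 * H * Real.sqrt ((k : ℝ) * d / lam) := by
        rw [Real.sqrt_mul (by positivity)]
        congr 1
        rw [show 4 * H ^ 2 = (2 * H) ^ 2 by ring, Real.sqrt_sq (by positivity)]
end

section
/- Let λ > 0, let φ_1, …, φ_t ∈ ℝ^d, and let Λ = λI + Σ_{i=1}^{t} φ_i φ_iᵀ. Then Σ_{i=1}^{t} φ_iᵀ Λ^{−1} φ_i ≤ d. -/
open Matrix

lemma posSemidef_vecMulVec_self' {d : ℕ} (v : Fin d → ℝ) :
    (vecMulVec v v).PosSemidef := by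
  rw [vecMulVec_eq (Fin 1)]
  have : (replicateCol (Fin 1) v) = (replicateRow (Fin 1) v)ᴴ := by
    ext i j; simp [replicateCol, replicateRow]
  rw [this]
  exact posSemidef_conjTranspose_mul_self _

lemma trace_nonneg_of_posSemidef {d : ℕ} {M : Matrix (Fin d) (Fin d) ℝ}
    (hM : M.PosSemidef) : 0 ≤ M.trace := by
  rw [Matrix.trace]
  apply Finset.sum_nonneg
  intro j _
  have := (posSemidef_iff_dotProduct_mulVec.mp hM).2 (Pi.single j 1)
  simpa [dotProduct, mulVec, Pi.single_apply, Finset.sum_ite_eq, Finset.sum_ite_eq'] using this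

/-- Lemma E.3 / Lemma D.1 of Jin et al. 2019.
Let `Λ = λ I + ∑ i φ i φ iᵀ` with `λ > 0`. Then `∑ i φ iᵀ Λ⁻¹ φ i ≤ d`. -/
theorem sum_quadratic_form_inv_gram_le_dim
    (d t : ℕ) (lam : ℝ) (hlam : 0 < lam)
    (φ : Fin t → (Fin d → ℝ))
    (Λ : Matrix (Fin d) (Fin d) ℝ)
    (hΛ : Λ = lam • (1 : Matrix (Fin d) (Fin d) ℝ) + ∑ i, vecMulVec (φ i) (φ i)) :
    ∑ i, φ i ⬝ᵥ (Λ⁻¹ *ᵥ φ i) ≤ (d : ℝ) := by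
  -- Λ is positive definite
  have hsum : (∑ i, vecMulVec (φ i) (φ i)).PosSemidef := by
    refine Finset.sum_induction _ _ (fun a b ha hb => ha.add hb)
      (Matrix.PosSemidef.zero) (fun i _ => posSemidef_vecMulVec_self' (φ i))
  have hid : (lam • (1 : Matrix (Fin d) (Fin d) ℝ)).PosDef := by
    refine posDef_iff_dotProduct_mulVec.mpr ⟨?_, fun x hx => ?_⟩
    · simp [Matrix.IsHermitian, Matrix.conjTranspose_smul]
    · have hxx : 0 < x ⬝ᵥ x := by
        rcases Function.ne_iff.mp hx with ⟨j, hj⟩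
        have : 0 < ∑ k, x k * x k :=
          Finset.sum_pos' (fun k _ => mul_self_nonneg _)
            ⟨j, Finset.mem_univ j, mul_self_pos.mpr hj⟩
        simpa [dotProduct] using this
      simpa [smul_mulVec, dotProduct_smul] using mul_pos hlam hxx
  have hPD : Λ.PosDef := hΛ ▸ hid.add_posSemidef hsum
  have hinv : Λ⁻¹.PosDef := hPD.inv
  -- rewrite sum as trace
  have key : ∀ i, φ i ⬝ᵥ (Λ⁻¹ *ᵥ φ i) = (Λ⁻¹ * vecMulVec (φ i) (φ i)).trace := by
    intro i
    simp only [Matrix.trace, Matrix.diag, Matrix.mul_apply, vecMulVec_apply, dotProduct,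
      mulVec, Finset.mul_sum, Finset.sum_mul]
    rw [Finset.sum_comm]
    refine Finset.sum_congr rfl fun x _ => Finset.sum_congr rfl fun y _ => ?_
    have hsym : Λ⁻¹ y x = Λ⁻¹ x y := by
      have := hinv.1.apply x y; simpa using this
    rw [hsym]; ring
  calc ∑ i, φ i ⬝ᵥ (Λ⁻¹ *ᵥ φ i)
      = (Λ⁻¹ * ∑ i, vecMulVec (φ i) (φ i)).trace := by
        simp_rw [key, Finset.mul_sum, Matrix.trace_sum]
    _ = (Λ⁻¹ * (Λ - lam • 1)).trace := by rw [hΛ, add_sub_cancel_left]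
    _ = (d : ℝ) - lam * Λ⁻¹.trace := by
        rw [Matrix.mul_sub, Matrix.trace_sub, Matrix.nonsing_inv_mul _ hPD.det_pos.ne'.isUnit,
          Matrix.trace_one]
        simp [Matrix.mul_smul, Matrix.trace_smul]
    _ ≤ (d : ℝ) := by
        have := trace_nonneg_of_posSemidef hinv.posSemidef
        nlinarith
end

section
/- Let S and A be sets with A nonempty, let H > 0, B > 0, let M ≥ 1 be an integer, and let φ : S × A → ℝ^d satisfy ‖φ(x,a)‖₂ ≤ 1 for all (x,a). For a tuple W = (w^1,…,w^M) of vectors in ℝ^d define V_W : S → ℝ by V_W(x) = sup_{a ∈ A} min{ max_{m ∈ {1,…,M}} ⟨φ(x,a), w^m⟩ , H }. Then for every ε > 0 there exists a finite set 𝒲 of tuples (w^1,…,w^M) with each ‖w^m‖₂ ≤ B and |𝒲| ≤ (1 + 2B/ε)^{dM} such that for every tuple W₁ with ‖w₁^m‖₂ ≤ B for all m there is W₂ ∈ 𝒲 with sup_{x ∈ S} |V_{W₁}(x) − V_{W₂}(x)| ≤ ε. Equivalently, the ε-covering number N of the class {V_W : ‖w^m‖₂ ≤ B for all m} with respect to the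 sup distance satisfies log N ≤ dM·log(1 + 2B/ε). -/
open scoped RealInnerProductSpace
open Metric MeasureTheory Module

private lemma packing_bound {E : Type*} [NormedAddCommGroup E] [NormedSpace ℝ E]
    [MeasurableSpace E] [BorelSpace E] [FiniteDimensional ℝ E]
    (μ : Measure E) [μ.IsAddHaarMeasure] {B ε : ℝ} (hB : 0 < B) (hε : 0 < ε)
    (s : Finset E) (hs : ↑s ⊆ closedBall (0:E) B)
    (hsep : (s : Set E).Pairwise fun x y => ε < dist x y) :
    (s.card : ℝ) ≤ (1 + 2 * B / ε) ^ (finrank ℝ E) := by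
  set n := finrank ℝ E with hn
  set c := μ (ball (0:E) 1) with hc
  have hc0 : c ≠ 0 := (measure_ball_pos μ 0 one_pos).ne'
  have hctop : c ≠ ⊤ := measure_ball_lt_top.ne
  have hdisj : (↑s : Set E).PairwiseDisjoint fun x => closedBall x (ε/2) := by
    intro x hx y hy hxy
    exact closedBall_disjoint_closedBall (by linarith [hsep hx hy hxy])
  have hsub : (⋃ x ∈ s, closedBall x (ε/2)) ⊆ closedBall (0:E) (B + ε/2) := by
    refine Set.iUnion₂_subset fun x hx => closedBall_subset_closedBall' ?_
    have hx' := hs hx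
    rw [mem_closedBall] at hx'
    linarith
  have key : ∑ x ∈ s, μ (closedBall x (ε/2)) ≤ μ (closedBall (0:E) (B + ε/2)) := by
    rw [← measure_biUnion_finset hdisj fun _ _ => measurableSet_closedBall]
    exact measure_mono hsub
  rw [Finset.sum_congr rfl (fun x _ => Measure.addHaar_closedBall μ x (by positivity : (0:ℝ) ≤ ε/2)),
    Finset.sum_const, Measure.addHaar_closedBall μ 0 (by positivity : (0:ℝ) ≤ B + ε/2)] at key
  rw [nsmul_eq_mul, ← mul_assoc, ENNReal.mul_le_mul_iff_left hc0 hctop] at key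
  have h2 : ((s.card : ℝ)) * (ε/2)^n ≤ (B + ε/2)^n := by
    rw [← ENNReal.ofReal_le_ofReal_iff (by positivity),
      ENNReal.ofReal_mul (by positivity), ENNReal.ofReal_natCast]
    exact key
  have hpow : (0:ℝ) < (ε/2)^n := by positivity
  calc (s.card : ℝ) ≤ (B + ε/2)^n / (ε/2)^n := (le_div_iff₀ hpow).2 h2
    _ = ((B + ε/2) / (ε/2))^n := (div_pow _ _ _).symm
    _ = (1 + 2 * B / ε)^n := by
        congr 1
        field_simp
        ring

private lemma exists_ball_net {E : Type*} [NormedAddCommGroup E] [NormedSpace ℝ E]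
    [MeasurableSpace E] [BorelSpace E] [FiniteDimensional ℝ E]
    (μ : Measure E) [μ.IsAddHaarMeasure] {B ε : ℝ} (hB : 0 < B) (hε : 0 < ε) :
    ∃ s : Finset E, ↑s ⊆ closedBall (0:E) B ∧
      (s.card : ℝ) ≤ (1 + 2 * B / ε) ^ (finrank ℝ E) ∧
      ∀ x ∈ closedBall (0:E) B, ∃ y ∈ s, dist x y ≤ ε := by
  classical
  set P : Finset E → Prop := fun s =>
    ↑s ⊆ closedBall (0:E) B ∧ (s : Set E).Pairwise fun x y => ε < dist x y with hP
  set C : Set ℕ := {n | ∃ s, P s ∧ s.card = n} with hC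
  have hbound : ∀ s, P s → s.card ≤ ⌈(1 + 2 * B / ε) ^ (finrank ℝ E)⌉₊ := by
    intro s hs
    have h1 := packing_bound μ hB hε s hs.1 hs.2
    have h2 := Nat.le_ceil ((1 + 2 * B / ε) ^ (finrank ℝ E))
    exact_mod_cast h1.trans h2
  have hCne : C.Nonempty := ⟨0, ∅, ⟨by simp, by simp⟩, rfl⟩
  have hCbdd : BddAbove C := ⟨⌈(1 + 2 * B / ε) ^ (finrank ℝ E)⌉₊, by
    rintro n ⟨s, hs, rfl⟩; exact hbound s hs⟩
  obtain ⟨s, hPs, hcard⟩ := Nat.sSup_mem hCne hCbdd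
  refine ⟨s, hPs.1, packing_bound μ hB hε s hPs.1 hPs.2, ?_⟩
  intro x hx
  by_contra hcon
  push_neg at hcon
  have hxs : x ∉ s := by
    intro h
    have := hcon x h
    simp [dist_self] at this
    linarith
  have hP' : P (insert x s) := by
    constructor
    · rw [Finset.coe_insert]
      exact Set.insert_subset hx hPs.1
    · rw [Finset.coe_insert]
      rw [Set.pairwise_insert]
      exact ⟨hPs.2, fun y hy _ => ⟨hcon y hy, by rw [dist_comm]; exact hcon y hy⟩⟩
  have hmem : (insert x s).card ∈ C := ⟨insert x s, hP', rfl⟩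
  have hle := le_csSup hCbdd hmem
  rw [Finset.card_insert_of_notMem hxs, hcard] at hle
  omega

/-- Lemma E.11; covering number of the multi-sample
optimistic value-function class used by MS-LMC-LSVI.
With `V_W(x) = sup_a min{ max_m ⟨φ(x,a), w^m⟩, H }` and `‖φ(x,a)‖₂ ≤ 1`, for
every `ε > 0` there is a set `𝒲` of parameter tuples, each coordinate in the
`B`-ball, with `|𝒲| ≤ (1 + 2B/ε)^{dM}`, inducing an `ε`-cover of
`{V_W : ‖w^m‖₂ ≤ B ∀ m}` in the sup distance; hence
`log N ≤ d M log(1 + 2B/ε)`. -/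
theorem multisample_value_class_covering
    {S A : Type*} [Nonempty A] (d M : ℕ) (hM : 1 ≤ M) (H B : ℝ)
    (hH : 0 < H) (hB : 0 < B)
    (φ : S × A → EuclideanSpace ℝ (Fin d)) (hφ : ∀ p, ‖φ p‖ ≤ 1)
    (V : (Fin M → EuclideanSpace ℝ (Fin d)) → S → ℝ)
    (hV : ∀ W x, V W x = ⨆ a : A, min (⨆ m : Fin M, ⟪φ (x, a), W m⟫) H)
    (ε : ℝ) (hε : 0 < ε) :
    ∃ 𝒲 : Finset (Fin M → EuclideanSpace ℝ (Fin d)),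
      (∀ W ∈ 𝒲, ∀ m, ‖W m‖ ≤ B)
      ∧ (𝒲.card : ℝ) ≤ (1 + 2 * B / ε) ^ (d * M)
      ∧ ∀ W₁ : Fin M → EuclideanSpace ℝ (Fin d), (∀ m, ‖W₁ m‖ ≤ B) →
          ∃ W₂ ∈ 𝒲, ∀ x : S, |V W₁ x - V W₂ x| ≤ ε := by
  classical
  haveI : Nonempty (Fin M) := ⟨⟨0, hM⟩⟩
  obtain ⟨s, hsB, hscard, hsnet⟩ :=
    exists_ball_net (volume : Measure (EuclideanSpace ℝ (Fin d))) hB hε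
  rw [finrank_euclideanSpace_fin] at hscard
  have key : ∀ (Wa Wb : Fin M → EuclideanSpace ℝ (Fin d)),
      (∀ m, dist (Wa m) (Wb m) ≤ ε) → ∀ x : S, V Wa x ≤ V Wb x + ε := by
    intro Wa Wb hab x
    rw [hV, hV]
    have hbddb : BddAbove (Set.range fun a : A =>
        min (⨆ m : Fin M, ⟪φ (x, a), Wb m⟫) H) := by
      refine ⟨H, ?_⟩
      rintro _ ⟨a, rfl⟩
      exact min_le_right _ _
    refine ciSup_le fun a => ?_
    have hsup : (⨆ m : Fin M, ⟪φ (x, a), Wa m⟫) ≤ (⨆ m : Fin M, ⟪φ (x, a), Wb m⟫) + ε := by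
      refine ciSup_le fun m => ?_
      have h1 : ⟪φ (x, a), Wa m⟫ - ⟪φ (x, a), Wb m⟫ ≤ ε := by
        have hin := real_inner_le_norm (φ (x, a)) (Wa m - Wb m)
        rw [inner_sub_right] at hin
        have hnn : ‖φ (x, a)‖ * ‖Wa m - Wb m‖ ≤ 1 * ε := by
          refine mul_le_mul (hφ _) ?_ (norm_nonneg _) zero_le_one
          rw [← dist_eq_norm]
          exact hab m
        linarith
      have h2 : ⟪φ (x, a), Wb m⟫ ≤ ⨆ m : Fin M, ⟪φ (x, a), Wb m⟫ :=
        le_ciSup (Finite.bddAbove_range fun m : Fin M => ⟪φ (x, a), Wb m⟫) m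
      linarith
    have hpt : min (⨆ m : Fin M, ⟪φ (x, a), Wa m⟫) H
        ≤ min (⨆ m : Fin M, ⟪φ (x, a), Wb m⟫) H + ε := by
      calc min (⨆ m : Fin M, ⟪φ (x, a), Wa m⟫) H
          ≤ min ((⨆ m : Fin M, ⟪φ (x, a), Wb m⟫) + ε) (H + ε) :=
            min_le_min hsup (le_add_of_nonneg_right hε.le)
        _ = min (⨆ m : Fin M, ⟪φ (x, a), Wb m⟫) H + ε := min_add_add_right _ _ _
    exact hpt.trans (add_le_add_left (le_ciSup hbddb a) ε)
  refine ⟨Fintype.piFinset (fun _ : Fin M => s), ?_, ?_, ?_⟩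
  · intro W hW m
    exact mem_closedBall_zero_iff.mp (hsB ((Fintype.mem_piFinset.mp hW) m))
  · rw [Fintype.card_piFinset]
    simp only [Finset.prod_const, Finset.card_univ, Fintype.card_fin]
    push_cast
    calc ((s.card : ℝ)) ^ M ≤ ((1 + 2 * B / ε) ^ d) ^ M :=
        pow_le_pow_left₀ (Nat.cast_nonneg _) hscard M
      _ = (1 + 2 * B / ε) ^ (d * M) := (pow_mul _ _ _).symm
  · intro W₁ hW₁
    choose f hf₁ hf₂ using fun m => hsnet (W₁ m) (mem_closedBall_zero_iff.mpr (hW₁ m))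
    refine ⟨f, Fintype.mem_piFinset.mpr hf₁, fun x => ?_⟩
    have h1 := key W₁ f hf₂ x
    have h2 := key f W₁ (fun m => by rw [dist_comm]; exact hf₂ m) x
    rw [abs_sub_le_iff]
    constructor <;> linarith
end
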